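/- (Lemma 3, per-demand-type reward bound.) Let d ≥ 1 and n ≥ d be integers, and let r_1 ≥ r_2 ≥ … ≥ r_n be reals with r_i ∈ [0,1] for all i and r_i = 0 for i > d. Let Y_1, …, Y_n be {0,1}-valued random variables on a probability space with E[Y_i] = y_i, such that Σ_{i=1}^n y_i ≤ 1 and, for every subset S ⊆ [n], P(Y_i = 0 for all i ∈ S) ≤ Π_{i∈S}(1 − y_i). Then E[max({r_i : Y_i = 1} ∪ {0})] ≥ (1 − (1 − 1/d)^d) · Σ_{i=1}^n r_i y_i. -/

import Mathlib

open MeasureTheory Finset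


/-- AM-GM padding bound. -/
lemma amgm_prod_bound {ι : Type*} (d : ℕ) (hd : 1 ≤ d) (S : Finset ι) (hcard : S.card ≤ d)
    (y : ι → ℝ) (hy1 : ∀ i, y i ≤ 1) :
    ∏ i ∈ S, (1 - y i) ≤ (1 - (∑ i ∈ S, y i) / d) ^ d := by
  classical
  have hd0 : (0:ℝ) < d := by exact_mod_cast hd
  set T : Finset (Option ι) := insert none (S.map Function.Embedding.some) with hT
  have hnone : none ∉ S.map Function.Embedding.some := by simp
  set w : Option ι → ℝ := fun o => o.elim (1 - S.card / d) (fun _ => 1 / d) with hw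
  set z : Option ι → ℝ := fun o => o.elim 1 (fun i => 1 - y i) with hz
  have hwnn : ∀ o ∈ T, 0 ≤ w o := by
    intro o _
    cases o with
    | none =>
        simp only [hw, Option.elim]
        have : (S.card : ℝ) ≤ d := by exact_mod_cast hcard
        have := div_le_one_of_le₀ this hd0.le
        linarith
    | some i => simp only [hw, Option.elim]; positivity
  have hwsum : ∑ o ∈ T, w o = 1 := by
    rw [Finset.sum_insert hnone, Finset.sum_map]
    simp only [hw, Function.Embedding.some_apply, Option.elim]
    rw [Finset.sum_const, nsmul_eq_mul]
    field_simp
    ring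
  have hznn : ∀ o ∈ T, 0 ≤ z o := by
    intro o _
    cases o with
    | none => simp [hz]
    | some i => simp only [hz, Option.elim]; linarith [hy1 i]
  have key := Real.geom_mean_le_arith_mean_weighted T w z hwnn hwsum hznn
  have hprodnn : 0 ≤ ∏ i ∈ S, (1 - y i) :=
    Finset.prod_nonneg fun i _ => by linarith [hy1 i]
  have hL : ∏ o ∈ T, z o ^ w o = (∏ i ∈ S, (1 - y i)) ^ ((d:ℝ)⁻¹) := by
    rw [Finset.prod_insert hnone, Finset.prod_map]
    simp only [hz, hw, Function.Embedding.some_apply, Option.elim]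
    rw [Real.one_rpow, one_mul, one_div]
    rw [Real.finset_prod_rpow S _ (fun i _ => by linarith [hy1 i])]
  have hR : ∑ o ∈ T, w o * z o = 1 - (∑ i ∈ S, y i) / d := by
    rw [Finset.sum_insert hnone, Finset.sum_map]
    simp only [hz, hw, Function.Embedding.some_apply, Option.elim]
    rw [mul_one]
    have h1 : ∑ i ∈ S, 1 / (d:ℝ) * (1 - y i)
        = 1 / d * ((S.card : ℝ) - ∑ i ∈ S, y i) := by
      rw [← Finset.mul_sum, Finset.sum_sub_distrib, Finset.sum_const, nsmul_eq_mul, mul_one]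
    rw [h1]; field_simp; ring
  rw [hL, hR] at key
  have h2 : ((∏ i ∈ S, (1 - y i)) ^ ((d:ℝ)⁻¹)) ^ d = ∏ i ∈ S, (1 - y i) := by
    rw [← Real.rpow_natCast ((∏ i ∈ S, (1 - y i)) ^ ((d:ℝ)⁻¹)) d,
      ← Real.rpow_mul hprodnn, inv_mul_cancel₀ (ne_of_gt hd0), Real.rpow_one]
  calc ∏ i ∈ S, (1 - y i) = ((∏ i ∈ S, (1 - y i)) ^ ((d:ℝ)⁻¹)) ^ d := h2.symm
    _ ≤ (1 - (∑ i ∈ S, y i) / d) ^ d :=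
        pow_le_pow_left₀ (Real.rpow_nonneg hprodnn _) key d

/-- Concavity bound. -/
lemma concavity_bound (d : ℕ) (hd : 1 ≤ d) (s : ℝ) (hs0 : 0 ≤ s) (hs1 : s ≤ 1) :
    (1 - (1 - 1 / (d:ℝ)) ^ d) * s ≤ 1 - (1 - s / d) ^ d := by
  have hd0 : (0:ℝ) < d := by exact_mod_cast hd
  have h1d : (0:ℝ) ≤ 1 - 1 / d := by
    have : 1 / (d:ℝ) ≤ 1 := by
      rw [div_le_one hd0]; exact_mod_cast hd
    linarith
  have hcx := (convexOn_pow d).2 (Set.mem_Ici.mpr (by norm_num : (0:ℝ) ≤ 1))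
    (Set.mem_Ici.mpr h1d) (by linarith : (0:ℝ) ≤ 1 - s) hs0 (by ring)
  simp only [smul_eq_mul, one_pow] at hcx
  have heq : (1 - s) * 1 + s * (1 - 1 / (d:ℝ)) = 1 - s / d := by field_simp; ring
  rw [heq] at hcx
  nlinarith [hcx]

/-- Lemma 3 (per-demand-type reward bound): for sorted rewards `r_1 ≥ … ≥ r_n` in `[0,1]` with
`r_i = 0` for `i > d`, and `{0,1}`-valued random variables `Y_i` with means `y_i`, `∑ y_i ≤ 1`,
that are negatively correlated on zeros, the expected largest reward among selected indices is at
least `(1 - (1 - 1/d)^d) ∑ r_i y_i`. -/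
theorem per_demand_type_reward_bound
    {Ω : Type*} [MeasurableSpace Ω] (P : Measure Ω) [IsProbabilityMeasure P]
    (d n : ℕ) (hd : 1 ≤ d) (hdn : d ≤ n)
    (r : Fin n → ℝ) (hr : ∀ i, r i ∈ Set.Icc (0 : ℝ) 1)
    (hsorted : ∀ i j : Fin n, i ≤ j → r j ≤ r i)
    (hzero : ∀ i : Fin n, d ≤ (i : ℕ) → r i = 0)
    (Y : Fin n → Ω → ℝ) (hmeas : ∀ i, Measurable (Y i))
    (h01 : ∀ i ω, Y i ω = 0 ∨ Y i ω = 1)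
    (y : Fin n → ℝ) (hmean : ∀ i, ∫ ω, Y i ω ∂P = y i)
    (hsum : ∑ i, y i ≤ 1)
    (hneg : ∀ S : Finset (Fin n),
      (P {ω | ∀ i ∈ S, Y i ω = 0}).toReal ≤ ∏ i ∈ S, (1 - y i)) :
    (∫ ω, sSup (insert (0 : ℝ) {v : ℝ | ∃ i, Y i ω = 1 ∧ v = r i}) ∂P)
      ≥ (1 - (1 - 1 / (d : ℝ)) ^ d) * ∑ i, r i * y i := by
  classical
  -- basic facts about y
  have hYint : ∀ i, Integrable (Y i) P := by
    intro i
    refine (integrable_const (1:ℝ)).mono' ((hmeas i).aestronglyMeasurable) ?_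
    refine Filter.Eventually.of_forall fun ω => ?_
    rcases h01 i ω with h | h <;> simp [h]
  have hy0 : ∀ i, 0 ≤ y i := by
    intro i; rw [← hmean i]
    refine integral_nonneg fun ω => ?_
    rcases h01 i ω with h | h <;> simp [h]
  have hy1 : ∀ i, y i ≤ 1 := by
    intro i; rw [← hmean i]
    calc ∫ ω, Y i ω ∂P ≤ ∫ _ω, (1:ℝ) ∂P := by
          refine integral_mono (hYint i) (integrable_const 1) fun ω => ?_
          rcases h01 i ω with h | h <;> simp [h]
      _ = 1 := by simp
  -- extended reward sequence and increments
  set r' : ℕ → ℝ := fun k => if h : k < n then r ⟨k, h⟩ else 0 with hr'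
  set c : ℕ → ℝ := fun k => r' k - r' (k+1) with hc
  have hr'nn : ∀ k, 0 ≤ r' k := by
    intro k; simp only [hr']
    split
    · exact (hr _).1
    · exact le_refl 0
  have hr'eq : ∀ i : Fin n, r' (i:ℕ) = r i := by
    intro i; simp only [hr', i.2, dif_pos, Fin.eta]
  have hr'n : r' n = 0 := by simp [hr']
  have hcnn : ∀ k, 0 ≤ c k := by
    intro k
    simp only [hc, sub_nonneg]
    by_cases hk1 : k + 1 < n
    · have hk : k < n := Nat.lt_of_succ_lt hk1
      simp only [hr', dif_pos hk1, dif_pos hk]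
      exact hsorted ⟨k, hk⟩ ⟨k+1, hk1⟩ (by simp [Fin.mk_le_mk])
    · simp only [hr', dif_neg hk1]
      exact hr'nn k
  have hr'zero : ∀ k, d ≤ k → r' k = 0 := by
    intro k hk
    simp only [hr']
    split
    · exact hzero _ hk
    · rfl
  have hczero : ∀ k, d ≤ k → c k = 0 := by
    intro k hk
    simp only [hc, hr'zero k hk, hr'zero (k+1) (le_trans hk (Nat.le_succ k)), sub_zero]
  -- telescoping
  have htel : ∀ m : ℕ, m < n →
      (∑ k ∈ Finset.range n, if m ≤ k then c k else 0) = r' m := by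
    intro m hm
    have hfil : Finset.filter (fun k => m ≤ k) (Finset.range n) = Finset.Ico m n := by
      ext k; simp [Finset.mem_filter, Finset.mem_range, Finset.mem_Ico, and_comm]
    rw [← Finset.sum_filter, hfil, Finset.sum_Ico_eq_sub _ hm.le]
    simp only [hc]
    rw [Finset.sum_range_sub' r', Finset.sum_range_sub' r', hr'n]
    ring
  -- the events
  set A : ℕ → Set Ω := fun k => {ω | ∃ i : Fin n, (i:ℕ) ≤ k ∧ Y i ω = 1} with hA
  have hAmeas : ∀ k, MeasurableSet (A k) := by
    intro k
    have : A k = ⋃ i : Fin n, ⋃ (_ : (i:ℕ) ≤ k), Y i ⁻¹' {1} := by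
      ext ω; simp [hA, Set.mem_iUnion, Set.mem_preimage]
    rw [this]
    exact MeasurableSet.iUnion fun i => MeasurableSet.iUnion fun _ =>
      (hmeas i) (measurableSet_singleton 1)
  -- pointwise identity
  have hpt : ∀ ω, sSup (insert (0:ℝ) {v : ℝ | ∃ i, Y i ω = 1 ∧ v = r i})
      = ∑ k ∈ Finset.range n, c k * (A k).indicator (fun _ => (1:ℝ)) ω := by
    intro ω
    by_cases hex : ∃ i : Fin n, Y i ω = 1
    · obtain ⟨j, hj⟩ := hex
      set Sel : Finset (Fin n) := Finset.univ.filter (fun i => Y i ω = 1) with hSel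
      have hne : Sel.Nonempty := ⟨j, by simp [hSel, hj]⟩
      set i₀ := Sel.min' hne with hi₀
      have hi₀mem : Y i₀ ω = 1 := by
        have := Sel.min'_mem hne
        simpa [hSel] using this
      have hi₀le : ∀ i : Fin n, Y i ω = 1 → i₀ ≤ i := fun i hi =>
        Sel.min'_le i (by simp [hSel, hi])
      have hLHS : sSup (insert (0:ℝ) {v : ℝ | ∃ i, Y i ω = 1 ∧ v = r i}) = r i₀ := by
        apply IsGreatest.csSup_eq
        constructor
        · exact Set.mem_insert_iff.mpr (Or.inr ⟨i₀, hi₀mem, rfl⟩)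
        · rintro v hv
          rcases Set.mem_insert_iff.mp hv with rfl | ⟨i, hi, rfl⟩
          · exact (hr i₀).1
          · exact hsorted i₀ i (hi₀le i hi)
      have hind : ∀ k, (A k).indicator (fun _ => (1:ℝ)) ω
          = if (i₀:ℕ) ≤ k then 1 else 0 := by
        intro k
        by_cases hk : (i₀:ℕ) ≤ k
        · rw [if_pos hk, Set.indicator_of_mem]
          exact ⟨i₀, hk, hi₀mem⟩
        · rw [if_neg hk, Set.indicator_of_notMem]
          rintro ⟨i, hik, hYi⟩
          exact hk (le_trans (hi₀le i hYi) hik)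
      rw [hLHS]
      calc r i₀ = r' (i₀ : ℕ) := (hr'eq i₀).symm
        _ = ∑ k ∈ Finset.range n, if (i₀:ℕ) ≤ k then c k else 0 := (htel _ i₀.2).symm
        _ = ∑ k ∈ Finset.range n, c k * (A k).indicator (fun _ => (1:ℝ)) ω := by
            refine Finset.sum_congr rfl fun k _ => ?_
            rw [hind k, mul_ite, mul_one, mul_zero]
    · have hset : {v : ℝ | ∃ i, Y i ω = 1 ∧ v = r i} = ∅ := by
        ext v
        simp only [Set.mem_setOf_eq, Set.mem_empty_iff_false, iff_false]
        rintro ⟨i, hi, _⟩; exact hex ⟨i, hi⟩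
      rw [hset, show (insert (0:ℝ) (∅ : Set ℝ)) = {0} by simp, csSup_singleton]
      symm
      apply Finset.sum_eq_zero
      intro k _
      rw [Set.indicator_of_notMem, mul_zero]
      rintro ⟨i, _, hYi⟩; exact hex ⟨i, hYi⟩
  -- integral computation
  have hint : ∀ k ∈ Finset.range n,
      Integrable (fun ω => c k * (A k).indicator (fun _ => (1:ℝ)) ω) P := by
    intro k _
    exact ((integrable_const (1:ℝ)).indicator (hAmeas k)).const_mul _
  have hInt : (∫ ω, sSup (insert (0:ℝ) {v : ℝ | ∃ i, Y i ω = 1 ∧ v = r i}) ∂P)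
      = ∑ k ∈ Finset.range n, c k * (P (A k)).toReal := by
    have h1 : (∫ ω, sSup (insert (0:ℝ) {v : ℝ | ∃ i, Y i ω = 1 ∧ v = r i}) ∂P)
        = ∫ ω, (∑ k ∈ Finset.range n, c k * (A k).indicator (fun _ => (1:ℝ)) ω) ∂P :=
      integral_congr_ae (Filter.Eventually.of_forall hpt)
    rw [h1, integral_finset_sum _ hint]
    refine Finset.sum_congr rfl fun k _ => ?_
    rw [integral_const_mul, integral_indicator_const (1:ℝ) (hAmeas k), smul_eq_mul, mul_one, Measure.real]
  -- probability lower bound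
  have hprob : ∀ k,
      1 - ∏ i ∈ Finset.univ.filter (fun i : Fin n => (i:ℕ) ≤ k), (1 - y i)
        ≤ (P (A k)).toReal := by
    intro k
    set S := Finset.univ.filter (fun i : Fin n => (i:ℕ) ≤ k) with hS
    have hcompl : {ω | ∀ i ∈ S, Y i ω = 0} = (A k)ᶜ := by
      ext ω
      simp only [Set.mem_setOf_eq, Set.mem_compl_iff, hA, hS, Finset.mem_filter,
        Finset.mem_univ, true_and]
      constructor
      · rintro h ⟨i, hik, hYi⟩
        rw [h i hik] at hYi; norm_num at hYi
      · intro h i hik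
        rcases h01 i ω with h0 | h1
        · exact h0
        · exact absurd ⟨i, hik, h1⟩ h
    have h2 := hneg S
    rw [hcompl] at h2
    have h3 : (P (A k)ᶜ).toReal = 1 - (P (A k)).toReal := by
      rw [measure_compl (hAmeas k) (measure_ne_top _ _), measure_univ,
        ENNReal.toReal_sub_of_le prob_le_one ENNReal.one_ne_top]
      simp
    rw [h3] at h2
    linarith
  -- per-term bound
  set C := 1 - (1 - 1 / (d:ℝ)) ^ d with hC
  have hterm : ∀ k ∈ Finset.range n,
      C * (c k * ∑ i ∈ Finset.univ.filter (fun i : Fin n => (i:ℕ) ≤ k), y i)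
        ≤ c k * (P (A k)).toReal := by
    intro k _
    set S := Finset.univ.filter (fun i : Fin n => (i:ℕ) ≤ k) with hS
    by_cases hkd : k < d
    · have hs0 : 0 ≤ ∑ i ∈ S, y i := Finset.sum_nonneg fun i _ => hy0 i
      have hs1 : ∑ i ∈ S, y i ≤ 1 :=
        le_trans (Finset.sum_le_sum_of_subset_of_nonneg (Finset.filter_subset _ _)
          (fun i _ _ => hy0 i)) hsum
      have hcard : S.card ≤ d := by
        have h1 : S.card ≤ (Finset.range (k+1)).card := by
          refine Finset.card_le_card_of_injOn (fun i => (i:ℕ)) (fun i hi => ?_)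
            (Fin.val_injective.injOn)
          rw [Finset.mem_coe, Finset.mem_filter] at hi
          simp [Finset.mem_range, Nat.lt_succ_iff, hi.2]
        rw [Finset.card_range] at h1
        omega
      have hamgm := amgm_prod_bound d hd S hcard y hy1
      have hconc := concavity_bound d hd _ hs0 hs1
      have hp := hprob k
      have : C * ∑ i ∈ S, y i ≤ (P (A k)).toReal := by
        rw [hC]
        calc (1 - (1 - 1 / (d:ℝ)) ^ d) * ∑ i ∈ S, y i
            ≤ 1 - (1 - (∑ i ∈ S, y i) / d) ^ d := hconc
          _ ≤ 1 - ∏ i ∈ S, (1 - y i) := by linarith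
          _ ≤ (P (A k)).toReal := hp
      calc C * (c k * ∑ i ∈ S, y i) = c k * (C * ∑ i ∈ S, y i) := by ring
        _ ≤ c k * (P (A k)).toReal := mul_le_mul_of_nonneg_left this (hcnn k)
    · have hck : c k = 0 := hczero k (le_of_not_gt hkd)
      simp [hck]
  -- sum rearrangement
  have hswap : ∑ k ∈ Finset.range n,
      c k * ∑ i ∈ Finset.univ.filter (fun i : Fin n => (i:ℕ) ≤ k), y i
      = ∑ i, r i * y i := by
    have h1 : ∀ k, c k * ∑ i ∈ Finset.univ.filter (fun i : Fin n => (i:ℕ) ≤ k), y i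
        = ∑ i : Fin n, (if (i:ℕ) ≤ k then c k * y i else 0) := by
      intro k
      rw [Finset.sum_filter, Finset.mul_sum]
      refine Finset.sum_congr rfl fun i _ => ?_
      rw [mul_ite, mul_zero]
    rw [Finset.sum_congr rfl fun k _ => h1 k, Finset.sum_comm]
    refine Finset.sum_congr rfl fun i _ => ?_
    have h2 : ∑ k ∈ Finset.range n, (if (i:ℕ) ≤ k then c k * y i else 0)
        = (∑ k ∈ Finset.range n, if (i:ℕ) ≤ k then c k else 0) * y i := by
      rw [Finset.sum_mul]
      refine Finset.sum_congr rfl fun k _ => ?_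
      rw [ite_mul, zero_mul]
    rw [h2, htel (i:ℕ) i.2, hr'eq i]
  -- conclusion
  rw [ge_iff_le, hInt, ← hswap, Finset.mul_sum]
  exact Finset.sum_le_sum hterm
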